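/- Let g(x) = G(x, e^{h(x)}) with G ∈ ℤ[X,Y], h ∈ ℤ[X]. Then g'(x) = G̃(x, e^{h(x)}), where G̃ = ∂G/∂X + h'(X)·Y·∂G/∂Y, and deg_X(G̃) ≤ deg(h) − 1 + deg_X(G), deg_Y(G̃) ≤ deg_Y(G), and H(G̃) ≤ H(G)·(deg_X(G) + deg_Y(G)·deg(h)²·H(h)). -/

import Mathlib

open MvPolynomial

/-- Height of an integer polynomial: max absolute value of its coefficients. -/
def heightP (h : Polynomial ℤ) : ℕ := h.support.sup fun i => (h.coeff i).natAbs

/-- Height of an integer bivariate polynomial. -/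
def heightM (G : MvPolynomial (Fin 2) ℤ) : ℕ :=
  G.support.sup fun m => (MvPolynomial.coeff m G).natAbs

/-- The operation `G ↦ G̃ = ∂G/∂X + h'(X)·Y·∂G/∂Y`. -/
noncomputable def etld (h : Polynomial ℤ) (G : MvPolynomial (Fin 2) ℤ) :
    MvPolynomial (Fin 2) ℤ :=
  MvPolynomial.pderiv 0 G +
    Polynomial.aeval (MvPolynomial.X 0) (Polynomial.derivative h) *
      MvPolynomial.X 1 * MvPolynomial.pderiv 1 G

lemma coeff_pderiv {σ : Type*} [DecidableEq σ] (i : σ) (f : MvPolynomial σ ℤ) (m : σ →₀ ℕ) :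
    coeff m (pderiv i f) = coeff (m + Finsupp.single i 1) f * (m i + 1) := by
  induction f using MvPolynomial.induction_on' with
  | monomial s a =>
    rw [pderiv_monomial]
    rcases eq_or_ne s (m + Finsupp.single i 1) with rfl | hne
    · simp [coeff_monomial, Finsupp.single_le_iff]
    · rw [coeff_monomial, coeff_monomial, if_neg hne, zero_mul]
      rcases Nat.eq_zero_or_pos (s i) with h0 | hpos
      · split
        · simp [h0]
        · rfl
      · rw [if_neg]
        intro hEq
        apply hne
        have : Finsupp.single i 1 ≤ s := by
          rwa [Finsupp.single_le_iff]
        rw [← hEq, tsub_add_cancel_of_le this]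
  | add p q hp hq => simp [hp, hq, add_mul]

lemma mem_support_pderiv {σ : Type*} [DecidableEq σ] {i : σ} {f : MvPolynomial σ ℤ} {m : σ →₀ ℕ}
    (hm : m ∈ (pderiv i f).support) : m + Finsupp.single i 1 ∈ f.support := by
  rw [mem_support_iff] at hm ⊢
  rw [_root_.coeff_pderiv] at hm
  exact fun h => hm (by simp [h])

lemma degreeOf_pderiv_ne {σ : Type*} [DecidableEq σ] {i j : σ} (hij : i ≠ j) (f : MvPolynomial σ ℤ) :
    degreeOf i (pderiv j f) ≤ degreeOf i f := by
  rw [degreeOf_le_iff]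
  intro m hm
  have := monomial_le_degreeOf i (mem_support_pderiv hm)
  simpa [Finsupp.single_apply, hij.symm] using this

lemma degreeOf_pderiv_self {σ : Type*} [DecidableEq σ] (i : σ) (f : MvPolynomial σ ℤ) :
    degreeOf i (pderiv i f) ≤ degreeOf i f - 1 := by
  rw [degreeOf_le_iff]
  intro m hm
  have := monomial_le_degreeOf i (mem_support_pderiv hm)
  simp [Finsupp.add_apply, Finsupp.single_apply] at this
  omega

lemma pderiv_eq_zero_of_degreeOf {σ : Type*} [DecidableEq σ] {i : σ} {f : MvPolynomial σ ℤ}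
    (h0 : degreeOf i f = 0) : pderiv i f = 0 := by
  ext m
  rw [_root_.coeff_pderiv, coeff_zero]
  rcases eq_or_ne (coeff (m + Finsupp.single i 1) f) 0 with hc | hc
  · simp [hc]
  · exfalso
    have := monomial_le_degreeOf i (mem_support_iff.2 hc)
    simp [h0, Finsupp.single_apply] at this

lemma coeff_aeval_X0 (p : Polynomial ℤ) (m : Fin 2 →₀ ℕ) :
    coeff m (Polynomial.aeval (X 0 : MvPolynomial (Fin 2) ℤ) p) =
      if m = Finsupp.single 0 (m 0) then p.coeff (m 0) else 0 := by
  rw [Polynomial.aeval_def, Polynomial.eval₂_eq_sum, Polynomial.sum_def, coeff_sum]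
  simp only [algebraMap_eq, coeff_C_mul, coeff_X_pow]
  split
  · rename_i hm
    rw [Finset.sum_eq_single (m 0)]
    · rw [if_pos hm.symm, mul_one]
    · intro e _ hne
      rw [if_neg, mul_zero]
      intro hc
      exact hne (by simpa using congrArg (fun f => f 0) hc)
    · intro hns
      simp [Polynomial.notMem_support_iff.1 hns]
  · rename_i hm
    apply Finset.sum_eq_zero
    intro e _
    rw [if_neg, mul_zero]
    intro hc
    have he : m 0 = e := by simpa using (congrArg (fun f => f 0) hc).symm
    exact hm (by rw [he, hc])

lemma natAbs_coeff_le_heightM (G : MvPolynomial (Fin 2) ℤ) (m : Fin 2 →₀ ℕ) :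
    (coeff m G).natAbs ≤ heightM G := by
  rcases eq_or_ne (coeff m G) 0 with hc | hc
  · simp [hc]
  · exact Finset.le_sup (f := fun m => (coeff m G).natAbs) (mem_support_iff.2 hc)

lemma natAbs_coeff_le_heightP (p : Polynomial ℤ) (k : ℕ) :
    (p.coeff k).natAbs ≤ heightP p := by
  rcases eq_or_ne (p.coeff k) 0 with hc | hc
  · simp [hc]
  · exact Finset.le_sup (f := fun i => (p.coeff i).natAbs)
      (Polynomial.mem_support_iff.2 hc)

lemma heightM_le {G : MvPolynomial (Fin 2) ℤ} {N : ℕ}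
    (hN : ∀ m, (coeff m G).natAbs ≤ N) : heightM G ≤ N :=
  Finset.sup_le fun m _ => hN m

lemma heightM_add_le (p q : MvPolynomial (Fin 2) ℤ) :
    heightM (p + q) ≤ heightM p + heightM q := by
  apply heightM_le
  intro m
  rw [coeff_add]
  exact (Int.natAbs_add_le _ _).trans
    (add_le_add (natAbs_coeff_le_heightM _ _) (natAbs_coeff_le_heightM _ _))

lemma coeff_A (p : Polynomial ℤ) (m : Fin 2 →₀ ℕ) (hm : coeff m
    (Polynomial.aeval (X 0 : MvPolynomial (Fin 2) ℤ) p * X 1) ≠ 0) :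
    m = Finsupp.single 0 (m 0) + Finsupp.single 1 1 ∧
    coeff m (Polynomial.aeval (X 0 : MvPolynomial (Fin 2) ℤ) p * X 1) = p.coeff (m 0) := by
  classical
  rw [coeff_mul_X'] at hm ⊢
  by_cases h1 : (1 : Fin 2) ∈ m.support
  · rw [if_pos h1] at hm ⊢
    rw [coeff_aeval_X0] at hm ⊢
    by_cases h2 : m - Finsupp.single 1 1 = Finsupp.single 0 ((m - Finsupp.single 1 1 : Fin 2 →₀ ℕ) 0)
    · rw [if_pos h2] at hm ⊢
      have hm0 : (m - Finsupp.single 1 1 : Fin 2 →₀ ℕ) 0 = m 0 := by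
        simp [Finsupp.tsub_apply, Finsupp.single_apply]
      have hle : Finsupp.single 1 1 ≤ m := by
        rw [Finsupp.single_le_iff]
        have : m 1 ≠ 0 := by simpa [Finsupp.mem_support_iff] using h1
        omega
      constructor
      · conv_lhs => rw [← tsub_add_cancel_of_le hle]
        rw [h2, hm0]
      · rw [hm0]
    · exact absurd (if_neg h2 ▸ rfl) hm
  · exact absurd (if_neg h1 ▸ rfl) hm

lemma heightM_A_le (p : Polynomial ℤ) :
    heightM (Polynomial.aeval (X 0 : MvPolynomial (Fin 2) ℤ) p * X 1) ≤ heightP p := by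
  apply heightM_le
  intro m
  rcases eq_or_ne (coeff m (Polynomial.aeval (X 0 : MvPolynomial (Fin 2) ℤ) p * X 1)) 0 with hc | hc
  · simp [hc]
  · rw [(coeff_A p m hc).2]
    exact natAbs_coeff_le_heightP p (m 0)

lemma card_support_A_le (p : Polynomial ℤ) :
    (Polynomial.aeval (X 0 : MvPolynomial (Fin 2) ℤ) p * X 1).support.card ≤ p.support.card := by
  apply Finset.card_le_card_of_injOn (fun m => m 0)
  · intro m hm
    rw [Finset.mem_coe, mem_support_iff] at hm
    obtain ⟨hstruct, hcoeff⟩ := coeff_A p m hm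
    rw [Finset.mem_coe, Polynomial.mem_support_iff]
    rw [hcoeff] at hm
    exact hm
  · intro m hm n hn hmn
    rw [Finset.mem_coe, mem_support_iff] at hm hn
    have h1 := (coeff_A p m hm).1
    have h2 := (coeff_A p n hn).1
    rw [h1, h2]
    simp only at hmn
    rw [hmn]

lemma natAbs_sum_le' {α : Type*} (s : Finset α) (f : α → ℤ) :
    (∑ x ∈ s, f x).natAbs ≤ ∑ x ∈ s, (f x).natAbs := by
  classical
  induction s using Finset.induction_on with
  | empty => simp
  | insert a s hx ih =>
    rw [Finset.sum_insert hx, Finset.sum_insert hx]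
    exact (Int.natAbs_add_le _ _).trans (add_le_add le_rfl ih)

lemma heightM_mul_le (p q : MvPolynomial (Fin 2) ℤ) :
    heightM (p * q) ≤ p.support.card * heightM p * heightM q := by
  classical
  apply heightM_le
  intro m
  rw [coeff_mul]
  calc (∑ x ∈ Finset.HasAntidiagonal.antidiagonal m, coeff x.1 p * coeff x.2 q).natAbs
      ≤ ∑ x ∈ Finset.HasAntidiagonal.antidiagonal m, (coeff x.1 p * coeff x.2 q).natAbs :=
        natAbs_sum_le' _ _
    _ ≤ ∑ x ∈ Finset.HasAntidiagonal.antidiagonal m,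
          (if x.1 ∈ p.support then heightM p * heightM q else 0) := by
        apply Finset.sum_le_sum
        intro x _
        rw [Int.natAbs_mul]
        by_cases hx : x.1 ∈ p.support
        · rw [if_pos hx]
          exact Nat.mul_le_mul (natAbs_coeff_le_heightM _ _) (natAbs_coeff_le_heightM _ _)
        · rw [if_neg hx, notMem_support_iff.1 hx]
          simp
    _ = ((Finset.HasAntidiagonal.antidiagonal m).filter (fun x => x.1 ∈ p.support)).card *
          (heightM p * heightM q) := by
        rw [← Finset.sum_filter, Finset.sum_const, smul_eq_mul]
    _ ≤ p.support.card * (heightM p * heightM q) := by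
        apply Nat.mul_le_mul_right
        apply Finset.card_le_card_of_injOn (fun x => x.1)
        · intro x hx
          exact (Finset.mem_filter.1 hx).2
        · intro x hx y hy hxy
          rw [Finset.mem_coe, Finset.mem_filter, Finset.HasAntidiagonal.mem_antidiagonal] at hx hy
          simp only at hxy
          have := hx.1.trans hy.1.symm
          rw [hxy] at this
          exact Prod.ext hxy (add_left_cancel this)
    _ = p.support.card * heightM p * heightM q := by ring

lemma heightM_pderiv_le (i : Fin 2) (f : MvPolynomial (Fin 2) ℤ) :
    heightM (pderiv i f) ≤ degreeOf i f * heightM f := by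
  apply heightM_le
  intro m
  rw [_root_.coeff_pderiv]
  rcases eq_or_ne (coeff (m + Finsupp.single i 1) f) 0 with hc | hc
  · simp [hc]
  · have hmem := monomial_le_degreeOf i (mem_support_iff.2 hc)
    have hmi : m i + 1 ≤ degreeOf i f := by
      simpa using hmem
    rw [Int.natAbs_mul]
    have h1 : (coeff (m + Finsupp.single i 1) f).natAbs ≤ heightM f :=
      natAbs_coeff_le_heightM _ _
    have h2 : ((m i : ℤ) + 1).natAbs ≤ degreeOf i f := by omega
    calc (coeff (m + Finsupp.single i 1) f).natAbs * ((m i : ℤ) + 1).natAbs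
        ≤ heightM f * degreeOf i f := Nat.mul_le_mul h1 h2
      _ = degreeOf i f * heightM f := mul_comm _ _

lemma heightP_derivative_le (p : Polynomial ℤ) :
    heightP (Polynomial.derivative p) ≤ p.natDegree * heightP p := by
  apply Finset.sup_le
  intro k hk
  rw [Polynomial.mem_support_iff, Polynomial.coeff_derivative] at hk
  rw [Polynomial.coeff_derivative, Int.natAbs_mul]
  have hc : p.coeff (k + 1) ≠ 0 := fun h => hk (by simp [h])
  have hdeg : k + 1 ≤ p.natDegree := Polynomial.le_natDegree_of_ne_zero hc
  have h2 : ((k : ℤ) + 1).natAbs ≤ p.natDegree := by omega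
  calc (p.coeff (k + 1)).natAbs * ((k : ℤ) + 1).natAbs
      ≤ heightP p * p.natDegree := Nat.mul_le_mul (natAbs_coeff_le_heightP _ _) h2
    _ = p.natDegree * heightP p := mul_comm _ _

lemma card_support_derivative_le (p : Polynomial ℤ) :
    (Polynomial.derivative p).support.card ≤ p.natDegree := by
  have hsub : (Polynomial.derivative p).support ⊆ Finset.range p.natDegree := by
    intro k hk
    rw [Polynomial.mem_support_iff, Polynomial.coeff_derivative] at hk
    have hc : p.coeff (k + 1) ≠ 0 := fun h => hk (by simp [h])
    have := Polynomial.le_natDegree_of_ne_zero hc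
    rw [Finset.mem_range]
    omega
  simpa using Finset.card_le_card hsub

lemma degreeOf_aeval_X0_le (p : Polynomial ℤ) :
    degreeOf 0 (Polynomial.aeval (X 0 : MvPolynomial (Fin 2) ℤ) p) ≤ p.natDegree := by
  rw [degreeOf_le_iff]
  intro m hm
  rw [mem_support_iff, coeff_aeval_X0] at hm
  by_cases h : m = Finsupp.single 0 (m 0)
  · rw [if_pos h] at hm
    exact Polynomial.le_natDegree_of_ne_zero hm
  · exact absurd (if_neg h ▸ rfl) hm

lemma degreeOf_one_aeval_X0 (p : Polynomial ℤ) :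
    degreeOf 1 (Polynomial.aeval (X 0 : MvPolynomial (Fin 2) ℤ) p) ≤ 0 := by
  rw [degreeOf_le_iff]
  intro m hm
  rw [mem_support_iff, coeff_aeval_X0] at hm
  by_cases h : m = Finsupp.single 0 (m 0)
  · rw [h]
    simp [Finsupp.single_apply]
  · exact absurd (if_neg h ▸ rfl) hm

lemma etld_add (h : Polynomial ℤ) (p q : MvPolynomial (Fin 2) ℤ) :
    etld h (p + q) = etld h p + etld h q := by
  simp only [etld, map_add]
  ring

lemma etld_mul (h : Polynomial ℤ) (p q : MvPolynomial (Fin 2) ℤ) :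
    etld h (p * q) = etld h p * q + p * etld h q := by
  simp only [etld, pderiv_mul]
  ring

lemma etld_C (h : Polynomial ℤ) (a : ℤ) : etld h (C a) = 0 := by
  simp [etld, pderiv_C]

lemma etld_X0 (h : Polynomial ℤ) : etld h (X 0) = 1 := by
  simp [etld, pderiv_X_of_ne (show (0 : Fin 2) ≠ 1 by decide)]

lemma etld_X1 (h : Polynomial ℤ) :
    etld h (X 1) = Polynomial.aeval (X 0 : MvPolynomial (Fin 2) ℤ) (Polynomial.derivative h) * X 1 := by
  simp [etld, pderiv_X_of_ne (show (1 : Fin 2) ≠ 0 by decide)]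

lemma aeval_comp (v : Fin 2 → ℝ) (q : Polynomial ℤ) :
    MvPolynomial.aeval v (Polynomial.aeval (X 0 : MvPolynomial (Fin 2) ℤ) q) =
      Polynomial.aeval (v 0) q := by
  rw [← Polynomial.aeval_algHom_apply]
  simp

lemma hasDerivAt_key (h : Polynomial ℤ) (p : MvPolynomial (Fin 2) ℤ) (x : ℝ) :
    HasDerivAt (fun t => MvPolynomial.aeval ![t, Real.exp (Polynomial.aeval t h)] p)
      (MvPolynomial.aeval ![x, Real.exp (Polynomial.aeval x h)] (etld h p)) x := by
  have hpoly : ∀ y : ℝ, HasDerivAt (fun t : ℝ => (Polynomial.aeval t h : ℝ))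
      (Polynomial.aeval y (Polynomial.derivative h)) y := by
    intro y
    have := (h.map (algebraMap ℤ ℝ)).hasDerivAt y
    simpa [Polynomial.aeval_def, Polynomial.eval_map, Polynomial.derivative_map] using this
  induction p using MvPolynomial.induction_on with
  | C a =>
    simp only [etld_C, map_zero, aeval_C]
    exact hasDerivAt_const x _
  | add p q hp hq => simpa [etld_add, map_add] using hp.fun_add hq
  | mul_X p n hp =>
    have hx : HasDerivAt (fun t => MvPolynomial.aeval ![t, Real.exp (Polynomial.aeval t h)] (X n : MvPolynomial (Fin 2) ℤ))
        (MvPolynomial.aeval ![x, Real.exp (Polynomial.aeval x h)] (etld h (X n))) x := by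
      fin_cases n
      · simpa [etld_X0] using hasDerivAt_id' (x := x)
      · show HasDerivAt
            (fun t => MvPolynomial.aeval ![t, Real.exp (Polynomial.aeval t h)] (X (1 : Fin 2)))
            (MvPolynomial.aeval ![x, Real.exp (Polynomial.aeval x h)] (etld h (X (1 : Fin 2)))) x
        have hexp := (hpoly x).exp
        rw [etld_X1]
        simp only [map_mul, aeval_X, aeval_comp, Matrix.cons_val_zero, Matrix.cons_val_one,
          Matrix.head_cons]
        simpa [mul_comm] using hexp
    simpa only [map_mul, map_add, etld_mul] using hp.fun_mul hx

theorem stmt_11 (G : MvPolynomial (Fin 2) ℤ) (h : Polynomial ℤ) :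
    (∀ x : ℝ,
      HasDerivAt (fun t => MvPolynomial.aeval ![t, Real.exp (Polynomial.aeval t h)] G)
        (MvPolynomial.aeval ![x, Real.exp (Polynomial.aeval x h)] (etld h G)) x) ∧
    MvPolynomial.degreeOf 0 (etld h G) ≤ h.natDegree - 1 + MvPolynomial.degreeOf 0 G ∧
    MvPolynomial.degreeOf 1 (etld h G) ≤ MvPolynomial.degreeOf 1 G ∧
    heightM (etld h G) ≤ heightM G *
      (MvPolynomial.degreeOf 0 G +
        MvPolynomial.degreeOf 1 G * h.natDegree ^ 2 * heightP h) := by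
  classical
  refine ⟨fun x => hasDerivAt_key h G x, ?_, ?_, ?_⟩
  · -- degreeOf 0 bound
    rw [etld]
    refine (degreeOf_add_le _ _ _).trans (max_le ?_ ?_)
    · exact (degreeOf_pderiv_self 0 G).trans (by omega)
    · refine (degreeOf_mul_le _ _ _).trans ?_
      have hA := degreeOf_mul_le (0 : Fin 2)
        (Polynomial.aeval (X 0 : MvPolynomial (Fin 2) ℤ) (Polynomial.derivative h)) (X 1)
      have h1 : degreeOf 0 (Polynomial.aeval (X 0 : MvPolynomial (Fin 2) ℤ)
          (Polynomial.derivative h)) ≤ h.natDegree - 1 :=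
        (degreeOf_aeval_X0_le _).trans (Polynomial.natDegree_derivative_le h)
      have h2 : degreeOf (0 : Fin 2) (X 1 : MvPolynomial (Fin 2) ℤ) ≤ 0 := by
        rw [degreeOf_X]
        simp
      have h3 : degreeOf 0 (pderiv 1 G) ≤ degreeOf 0 G :=
        degreeOf_pderiv_ne (by decide) G
      omega
  · -- degreeOf 1 bound
    rw [etld]
    refine (degreeOf_add_le _ _ _).trans (max_le ?_ ?_)
    · exact degreeOf_pderiv_ne (by decide) G
    · rcases Nat.eq_zero_or_pos (degreeOf 1 G) with h0 | hpos
      · rw [pderiv_eq_zero_of_degreeOf h0, mul_zero, degreeOf_zero]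
        exact Nat.zero_le _
      · refine (degreeOf_mul_le _ _ _).trans ?_
        have hA := degreeOf_mul_le (1 : Fin 2)
          (Polynomial.aeval (X 0 : MvPolynomial (Fin 2) ℤ) (Polynomial.derivative h)) (X 1)
        have h1 := degreeOf_one_aeval_X0 (Polynomial.derivative h)
        have h2 : degreeOf (1 : Fin 2) (X 1 : MvPolynomial (Fin 2) ℤ) ≤ 1 := by
          rw [degreeOf_X]
          simp
        have h3 := degreeOf_pderiv_self 1 G
        omega
  · -- height bound
    rw [etld]
    set A := Polynomial.aeval (X 0 : MvPolynomial (Fin 2) ℤ) (Polynomial.derivative h) * X 1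
      with hA
    have hcard : A.support.card ≤ h.natDegree :=
      (card_support_A_le _).trans (card_support_derivative_le h)
    have hheight : heightM A ≤ h.natDegree * heightP h :=
      (heightM_A_le _).trans (heightP_derivative_le h)
    calc heightM (pderiv 0 G + A * pderiv 1 G)
        ≤ heightM (pderiv 0 G) + heightM (A * pderiv 1 G) := heightM_add_le _ _
      _ ≤ degreeOf 0 G * heightM G + A.support.card * heightM A * heightM (pderiv 1 G) :=
          add_le_add (heightM_pderiv_le _ _) (heightM_mul_le _ _)
      _ ≤ degreeOf 0 G * heightM G +
            h.natDegree * (h.natDegree * heightP h) * (degreeOf 1 G * heightM G) := by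
          gcongr
          exact heightM_pderiv_le _ _
      _ = heightM G * (degreeOf 0 G + degreeOf 1 G * h.natDegree ^ 2 * heightP h) := by
          ring
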